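/- arXiv:1709.08121 — 2 statements merged into one kernel-verified Lean document; each statement's English description precedes it below -/
import Mathlib

section
/- Let φ(z) = a_d z^d + ... + a_1 z + a_0 be a complex polynomial of degree d ≥ 2. If |z| > 2d · max_{0 ≤ i ≤ d} {1, |a_i/a_d|^{1/(d-i)}, |a_d|^{-1/(d-1)}}, then G_φ(z) = log|z| + (1/(d-1)) log|a_d| + ε where −log 2 ≤ ε ≤ log(3/2), and G_φ(z) = lim_n d^{-n} log max{1, |φ^n(z)|} is the escape-rate function. -/
open Polynomial Filter Topology

-- sandwich lemma
lemma poly_sandwich (φ : Polynomial ℂ) (d : ℕ) (hd : 2 ≤ d) (hdeg : φ.natDegree = d)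
    (M : ℝ) (hM1 : 1 ≤ M)
    (hMi : ∀ i < d, ‖φ.coeff i / φ.coeff d‖ ≤ M ^ (d - i))
    (w : ℂ) (hw : 2 * d * M < ‖w‖) :
    (1/2) * ‖φ.coeff d‖ * ‖w‖^d ≤ ‖φ.eval w‖ ∧
      ‖φ.eval w‖ ≤ (3/2) * ‖φ.coeff d‖ * ‖w‖^d := by
  have hd0 : (0:ℝ) < 2 * d := by positivity
  have hdr : (2:ℝ) ≤ (d:ℝ) := by exact_mod_cast hd
  have hw4 : (4:ℝ) ≤ ‖w‖ := by
    have h1 : 2 * (d:ℝ) * 1 ≤ 2 * d * M := by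
      apply mul_le_mul_of_nonneg_left hM1 (by linarith)
    linarith
  have hw0 : (0:ℝ) < ‖w‖ := by linarith
  have ha : φ.coeff d ≠ 0 := by
    have hφ : φ ≠ 0 := by
      intro h; rw [h] at hdeg; simp at hdeg; omega
    rw [← hdeg]; exact Polynomial.leadingCoeff_ne_zero.mpr hφ
  have ha0 : (0:ℝ) < ‖φ.coeff d‖ := norm_pos_iff.mpr ha
  have heval : φ.eval w = (∑ i ∈ Finset.range d, φ.coeff i * w ^ i) + φ.coeff d * w ^ d := by
    rw [Polynomial.eval_eq_sum_range' (n := d + 1) (by omega)]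
    rw [Finset.sum_range_succ]
  -- bound on tail
  have htail : ‖∑ i ∈ Finset.range d, φ.coeff i * w ^ i‖ ≤ (1/2) * ‖φ.coeff d‖ * ‖w‖^d := by
    calc ‖∑ i ∈ Finset.range d, φ.coeff i * w ^ i‖
        ≤ ∑ i ∈ Finset.range d, ‖φ.coeff i * w ^ i‖ := norm_sum_le _ _
      _ ≤ ∑ i ∈ Finset.range d, ‖φ.coeff d‖ * ‖w‖^d / (2 * d) := by
          apply Finset.sum_le_sum
          intro i hi
          have hid : i < d := Finset.mem_range.mp hi
          have h1 : ‖φ.coeff i * w ^ i‖ = ‖φ.coeff i / φ.coeff d‖ * ‖φ.coeff d‖ * ‖w‖ ^ i := by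
            rw [norm_mul, norm_pow]
            congr 1
            rw [← norm_mul, div_mul_cancel₀ _ ha]
          rw [h1]
          have hM0 : 0 < M := lt_of_lt_of_le one_pos hM1
          have hMw : M ≤ ‖w‖ / (2 * d) := by
            rw [le_div_iff₀ hd0]; nlinarith
          have h2 : ‖φ.coeff i / φ.coeff d‖ ≤ (‖w‖ / (2 * d)) ^ (d - i) := by
            refine le_trans (hMi i hid) (pow_le_pow_left₀ hM0.le hMw _)
          have h3 : (‖w‖ / (2 * d)) ^ (d - i) * ‖w‖ ^ i ≤ ‖w‖ ^ d / (2 * d) := by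
            rw [div_pow]
            rw [div_mul_eq_mul_div, div_le_div_iff₀ (by positivity) hd0]
            have hpw : ‖w‖ ^ (d - i) * ‖w‖ ^ i = ‖w‖ ^ d := by
              rw [← pow_add]; congr 1; omega
            have hc : 2 * (d:ℝ) ≤ (2 * d) ^ (d - i) := by
              calc 2 * (d:ℝ) = (2*d)^1 := by ring
                _ ≤ (2*d)^(d-i) := by
                    apply pow_le_pow_right₀ (by linarith) (by omega)
            nlinarith [pow_pos hw0 d, pow_pos hd0 (d - i)]
          calc ‖φ.coeff i / φ.coeff d‖ * ‖φ.coeff d‖ * ‖w‖ ^ i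
              ≤ (‖w‖ / (2 * d)) ^ (d - i) * ‖φ.coeff d‖ * ‖w‖ ^ i := by
                apply mul_le_mul_of_nonneg_right _ (by positivity)
                exact mul_le_mul_of_nonneg_right h2 ha0.le
            _ = ‖φ.coeff d‖ * ((‖w‖ / (2 * d)) ^ (d - i) * ‖w‖ ^ i) := by ring
            _ ≤ ‖φ.coeff d‖ * (‖w‖ ^ d / (2 * d)) := by
                exact mul_le_mul_of_nonneg_left h3 ha0.le
            _ = ‖φ.coeff d‖ * ‖w‖^d / (2 * d) := by ring
      _ = d * (‖φ.coeff d‖ * ‖w‖^d / (2 * d)) := by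
          rw [Finset.sum_const, Finset.card_range]; ring
      _ = (1/2) * ‖φ.coeff d‖ * ‖w‖^d := by
          field_simp
  have hlead : ‖φ.coeff d * w ^ d‖ = ‖φ.coeff d‖ * ‖w‖^d := by rw [norm_mul, norm_pow]
  constructor
  · have := norm_sub_norm_le (φ.coeff d * w ^ d) (-(∑ i ∈ Finset.range d, φ.coeff i * w ^ i))
    have heq : φ.coeff d * w ^ d - -(∑ i ∈ Finset.range d, φ.coeff i * w ^ i) = φ.eval w := by
      rw [heval]; ring
    rw [heq, norm_neg, hlead] at this
    linarith
  · rw [heval]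
    calc ‖(∑ i ∈ Finset.range d, φ.coeff i * w ^ i) + φ.coeff d * w ^ d‖
        ≤ ‖∑ i ∈ Finset.range d, φ.coeff i * w ^ i‖ + ‖φ.coeff d * w ^ d‖ := norm_add_le _ _
      _ ≤ (1/2) * ‖φ.coeff d‖ * ‖w‖^d + ‖φ.coeff d‖ * ‖w‖^d := by rw [hlead]; linarith
      _ = (3/2) * ‖φ.coeff d‖ * ‖w‖^d := by ring

-- invariance: |φ(w)| ≥ 2|w| on the escape region
lemma poly_invar (φ : Polynomial ℂ) (d : ℕ) (hd : 2 ≤ d) (hdeg : φ.natDegree = d)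
    (M : ℝ) (hM1 : 1 ≤ M)
    (hMi : ∀ i < d, ‖φ.coeff i / φ.coeff d‖ ≤ M ^ (d - i))
    (hMa : (M ^ (d - 1))⁻¹ ≤ ‖φ.coeff d‖)
    (w : ℂ) (hw : 2 * d * M < ‖w‖) :
    2 * ‖w‖ ≤ ‖φ.eval w‖ := by
  have hdr : (2:ℝ) ≤ (d:ℝ) := by exact_mod_cast hd
  have hM0 : (0:ℝ) < M := lt_of_lt_of_le one_pos hM1
  have hw0 : (0:ℝ) < ‖w‖ := lt_of_le_of_lt (by positivity) hw
  obtain ⟨hlow, _⟩ := poly_sandwich φ d hd hdeg M hM1 hMi w hw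
  -- ‖a‖ * ‖w‖^(d-1) ≥ (2d)^(d-1) ≥ 4
  have key : (4:ℝ) ≤ ‖φ.coeff d‖ * ‖w‖ ^ (d - 1) := by
    have h1 : (2 * d * M) ^ (d - 1) ≤ ‖w‖ ^ (d - 1) :=
      pow_le_pow_left₀ (by positivity) hw.le _
    have h2 : (2 * (d:ℝ) * M) ^ (d - 1) = (2 * d) ^ (d - 1) * M ^ (d - 1) := by
      rw [mul_pow]
    have h3 : (4:ℝ) ≤ (2 * (d:ℝ)) ^ (d - 1) := by
      calc (4:ℝ) ≤ 2 * (d:ℝ) := by linarith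
        _ = (2 * (d:ℝ)) ^ 1 := by ring
        _ ≤ (2 * (d:ℝ)) ^ (d - 1) := pow_le_pow_right₀ (by linarith) (by omega)
    have hMp : (0:ℝ) < M ^ (d - 1) := by positivity
    calc (4:ℝ) ≤ (2 * (d:ℝ)) ^ (d - 1) := h3
      _ = (M ^ (d-1))⁻¹ * ((2 * (d:ℝ)) ^ (d - 1) * M ^ (d-1)) := by field_simp
      _ ≤ ‖φ.coeff d‖ * ((2 * (d:ℝ)) ^ (d - 1) * M ^ (d-1)) := by
          apply mul_le_mul_of_nonneg_right hMa (by positivity)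
      _ = ‖φ.coeff d‖ * (2 * (d:ℝ) * M) ^ (d - 1) := by rw [h2]
      _ ≤ ‖φ.coeff d‖ * ‖w‖ ^ (d - 1) := by
          apply mul_le_mul_of_nonneg_left h1 (norm_nonneg _)
  have hsplit : ‖w‖ ^ d = ‖w‖ ^ (d - 1) * ‖w‖ := by
    rw [← pow_succ]; congr 1; omega
  calc 2 * ‖w‖ = (1/2) * 4 * ‖w‖ := by ring
    _ ≤ (1/2) * (‖φ.coeff d‖ * ‖w‖ ^ (d - 1)) * ‖w‖ := by nlinarith
    _ = (1/2) * ‖φ.coeff d‖ * ‖w‖ ^ d := by rw [hsplit]; ring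
    _ ≤ ‖φ.eval w‖ := hlow
/-- archimedean escape-rate estimate: for a complex polynomial φ of
degree d ≥ 2 and |z| > 2d · max_{0≤i≤d} {1, |a_i/a_d|^{1/(d-i)}, |a_d|^{-1/(d-1)}},
G_φ(z) = log|z| + (1/(d-1)) log|a_d| + ε with -log 2 ≤ ε ≤ log(3/2). -/
theorem stmt2 (φ : Polynomial ℂ) (d : ℕ) (hd : 2 ≤ d) (hdeg : φ.natDegree = d)
    (z : ℂ)
    (hz : ‖z‖ > (2 * d : ℝ) *
      (Finset.range (d + 1)).sup' (Finset.nonempty_range_iff.mpr (Nat.succ_ne_zero d))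
        (fun i => max 1 (max (‖φ.coeff i / φ.coeff d‖ ^ ((1 : ℝ) / ((d : ℝ) - (i : ℝ))))
          (‖φ.coeff d‖ ^ (-(1 : ℝ) / ((d : ℝ) - 1)))))) :
    ∃ ε : ℝ, -Real.log 2 ≤ ε ∧ ε ≤ Real.log (3 / 2) ∧
      Tendsto
        (fun n : ℕ => ((d : ℝ) ^ n)⁻¹ * Real.log (max 1 ‖(fun x => φ.eval x)^[n] z‖))
        atTop
        (nhds (Real.log ‖z‖ + (1 / ((d : ℝ) - 1)) * Real.log ‖φ.coeff d‖ + ε)) := by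
  set M : ℝ := (Finset.range (d + 1)).sup' (Finset.nonempty_range_iff.mpr (Nat.succ_ne_zero d))
        (fun i => max 1 (max (‖φ.coeff i / φ.coeff d‖ ^ ((1 : ℝ) / ((d : ℝ) - (i : ℝ))))
          (‖φ.coeff d‖ ^ (-(1 : ℝ) / ((d : ℝ) - 1))))) with hMdef
  have hdr : (2:ℝ) ≤ (d:ℝ) := by exact_mod_cast hd
  have ha : φ.coeff d ≠ 0 := by
    have hφ : φ ≠ 0 := by intro h; rw [h] at hdeg; simp at hdeg; omega
    rw [← hdeg]; exact Polynomial.leadingCoeff_ne_zero.mpr hφ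
  have ha0 : (0:ℝ) < ‖φ.coeff d‖ := norm_pos_iff.mpr ha
  have hsup : ∀ i ∈ Finset.range (d + 1),
      max 1 (max (‖φ.coeff i / φ.coeff d‖ ^ ((1 : ℝ) / ((d : ℝ) - (i : ℝ))))
        (‖φ.coeff d‖ ^ (-(1 : ℝ) / ((d : ℝ) - 1)))) ≤ M := by
    intro i hi
    exact Finset.le_sup' (fun i => max 1 (max (‖φ.coeff i / φ.coeff d‖ ^ ((1 : ℝ) / ((d : ℝ) - (i : ℝ))))
          (‖φ.coeff d‖ ^ (-(1 : ℝ) / ((d : ℝ) - 1))))) hi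
  have hM1 : 1 ≤ M :=
    le_trans (le_max_left _ _) (hsup 0 (Finset.mem_range.mpr (by omega)))
  have hM0 : (0:ℝ) < M := lt_of_lt_of_le one_pos hM1
  -- coefficient bounds
  have hMi : ∀ i < d, ‖φ.coeff i / φ.coeff d‖ ≤ M ^ (d - i) := by
    intro i hid
    have hmem : i ∈ Finset.range (d + 1) := Finset.mem_range.mpr (by omega)
    have h1 : ‖φ.coeff i / φ.coeff d‖ ^ ((1 : ℝ) / ((d : ℝ) - (i : ℝ))) ≤ M :=
      le_trans (le_trans (le_max_left _ _) (le_max_right _ _)) (hsup i hmem)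
    have he : ((d - i : ℕ) : ℝ) = (d : ℝ) - (i : ℝ) := by
      push_cast [Nat.cast_sub hid.le]; ring
    have he0 : (0:ℝ) < (d : ℝ) - (i : ℝ) := by
      rw [← he]; exact_mod_cast Nat.sub_pos_of_lt hid
    have hx0 : (0:ℝ) ≤ ‖φ.coeff i / φ.coeff d‖ := norm_nonneg _
    have h2 : (‖φ.coeff i / φ.coeff d‖ ^ ((1 : ℝ) / ((d : ℝ) - (i : ℝ)))) ^ ((d:ℝ) - i) ≤ M ^ ((d:ℝ) - i) :=
      Real.rpow_le_rpow (Real.rpow_nonneg hx0 _) h1 he0.le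
    calc ‖φ.coeff i / φ.coeff d‖
        = (‖φ.coeff i / φ.coeff d‖ ^ ((1 : ℝ) / ((d : ℝ) - (i : ℝ)))) ^ ((d:ℝ) - i) := by
          rw [← Real.rpow_mul hx0, one_div, inv_mul_cancel₀ he0.ne', Real.rpow_one]
      _ ≤ M ^ ((d:ℝ) - i) := h2
      _ = M ^ (d - i) := by rw [← he, Real.rpow_natCast]
  -- leading coefficient bound
  have hMa : (M ^ (d - 1))⁻¹ ≤ ‖φ.coeff d‖ := by
    have hmem : 0 ∈ Finset.range (d + 1) := Finset.mem_range.mpr (by omega)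
    have h1 : ‖φ.coeff d‖ ^ (-(1 : ℝ) / ((d : ℝ) - 1)) ≤ M :=
      le_trans (le_trans (le_max_right _ _) (le_max_right _ _)) (hsup 0 hmem)
    have he : ((d - 1 : ℕ) : ℝ) = (d : ℝ) - 1 := by
      push_cast [Nat.cast_sub (by omega : 1 ≤ d)]; ring
    have he0 : (0:ℝ) < (d : ℝ) - 1 := by linarith
    have h2 : (‖φ.coeff d‖ ^ (-(1 : ℝ) / ((d : ℝ) - 1))) ^ ((d:ℝ) - 1) ≤ M ^ ((d:ℝ) - 1) :=
      Real.rpow_le_rpow (Real.rpow_nonneg ha0.le _) h1 he0.le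
    have h3 : (‖φ.coeff d‖ ^ (-(1 : ℝ) / ((d : ℝ) - 1))) ^ ((d:ℝ) - 1) = ‖φ.coeff d‖⁻¹ := by
      rw [← Real.rpow_mul ha0.le, neg_div, neg_mul, one_div, inv_mul_cancel₀ he0.ne',
        Real.rpow_neg_one]
    rw [h3] at h2
    have hMp : (0:ℝ) < M ^ ((d:ℝ) - 1) := Real.rpow_pos_of_pos hM0 _
    have h4 : (M ^ ((d:ℝ) - 1))⁻¹ ≤ ‖φ.coeff d‖ := by
      rw [inv_le_comm₀ hMp ha0]
      exact h2
    calc (M ^ (d - 1) : ℝ)⁻¹ = (M ^ ((d:ℝ) - 1))⁻¹ := by rw [← he, Real.rpow_natCast]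
      _ ≤ ‖φ.coeff d‖ := h4
  -- iterates stay in the escape region
  set w : ℕ → ℂ := fun n => (fun x => φ.eval x)^[n] z with hwdef
  have hw0 : w 0 = z := rfl
  have hwsucc : ∀ n, w (n + 1) = φ.eval (w n) := by
    intro n; rw [hwdef]; simp [Function.iterate_succ_apply']
  have hwn : ∀ n, 2 * d * M < ‖w n‖ := by
    intro n
    induction n with
    | zero => exact hz
    | succ n ih =>
      have h2 := poly_invar φ d hd hdeg M hM1 hMi hMa (w n) ih
      rw [hwsucc]
      have h3 : (0:ℝ) ≤ ‖w n‖ := norm_nonneg _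
      linarith
  have hR4 : (4:ℝ) ≤ 2 * d * M := by nlinarith
  have hwp : ∀ n, (1:ℝ) < ‖w n‖ := fun n => by linarith [hwn n]
  -- constants
  set c : ℝ := (1 / ((d:ℝ) - 1)) * Real.log ‖φ.coeff d‖ with hcdef
  have hdm1 : (0:ℝ) < (d:ℝ) - 1 := by linarith
  have hcc : ((d:ℝ) - 1) * c = Real.log ‖φ.coeff d‖ := by
    rw [hcdef]; field_simp
  set δ : ℕ → ℝ := fun n =>
    Real.log ‖w (n+1)‖ - d * Real.log ‖w n‖ - Real.log ‖φ.coeff d‖ with hδdef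
  have hδbound : ∀ n, -Real.log 2 ≤ δ n ∧ δ n ≤ Real.log (3/2) := by
    intro n
    obtain ⟨hl, hu⟩ := poly_sandwich φ d hd hdeg M hM1 hMi (w n) (hwn n)
    rw [← hwsucc] at hl hu
    have hwnp : (0:ℝ) < ‖w n‖ := by linarith [hwp n]
    have hlog1 : Real.log ((1/2) * ‖φ.coeff d‖ * ‖w n‖ ^ d) ≤ Real.log ‖w (n+1)‖ :=
      Real.log_le_log (by positivity) hl
    have hlog2 : Real.log ‖w (n+1)‖ ≤ Real.log ((3/2) * ‖φ.coeff d‖ * ‖w n‖ ^ d) :=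
      Real.log_le_log (by linarith [hwp (n+1)]) hu
    have he1 : Real.log ((1/2) * ‖φ.coeff d‖ * ‖w n‖ ^ d)
        = -Real.log 2 + Real.log ‖φ.coeff d‖ + d * Real.log ‖w n‖ := by
      rw [Real.log_mul (by positivity) (by positivity),
        Real.log_mul (by norm_num) (ne_of_gt ha0), Real.log_pow, one_div, Real.log_inv]
    have he2 : Real.log ((3/2) * ‖φ.coeff d‖ * ‖w n‖ ^ d)
        = Real.log (3/2) + Real.log ‖φ.coeff d‖ + d * Real.log ‖w n‖ := by
      rw [Real.log_mul (by positivity) (by positivity),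
        Real.log_mul (by norm_num) (ne_of_gt ha0), Real.log_pow]
    rw [he1] at hlog1; rw [he2] at hlog2
    rw [hδdef]
    constructor <;> simp only [] <;> [linarith; linarith]
  -- the normalized sequence
  set u : ℕ → ℝ := fun n => Real.log ‖w n‖ + c with hudef
  set s : ℕ → ℝ := fun n => ((d:ℝ) ^ n)⁻¹ * u n with hsdef
  have hdne : (d:ℝ) ≠ 0 := by linarith
  have hstep : ∀ n, s (n+1) = s n + (1/(d:ℝ))^(n+1) * δ n := by
    intro n
    have hkey : u (n+1) = (d:ℝ) * u n + δ n := by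
      rw [hudef, hδdef]; simp only []; linarith [hcc]
    rw [hsdef]; simp only []
    rw [hkey]
    rw [one_div, inv_pow, pow_succ, mul_inv, mul_add, mul_assoc ((d:ℝ)^n)⁻¹, inv_mul_cancel_left₀ hdne]
  have hsum : ∀ n, s n = s 0 + ∑ k ∈ Finset.range n, (1/(d:ℝ))^(k+1) * δ k := by
    intro n
    induction n with
    | zero => simp
    | succ n ih => rw [hstep n, ih, Finset.sum_range_succ]; ring
  -- summability
  have hr0 : (0:ℝ) ≤ 1/(d:ℝ) := by positivity
  have hr1 : (1:ℝ)/(d:ℝ) < 1 := by rw [div_lt_one (by linarith)]; linarith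
  have hg : Summable (fun k : ℕ => (1/(d:ℝ))^(k+1)) := by
    simpa [pow_succ] using (summable_geometric_of_lt_one hr0 hr1).mul_right (1/(d:ℝ))
  have hδabs : ∀ k, |δ k| ≤ Real.log 2 := by
    intro k
    obtain ⟨h1, h2⟩ := hδbound k
    have h3 : Real.log (3/2) ≤ Real.log 2 := Real.log_le_log (by norm_num) (by norm_num)
    rw [abs_le]; exact ⟨by linarith, le_trans h2 h3⟩
  have hfsum : Summable (fun k : ℕ => (1/(d:ℝ))^(k+1) * δ k) := by
    apply Summable.of_norm_bounded (g := fun k : ℕ => (1/(d:ℝ))^(k+1) * Real.log 2)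
      (hg.mul_right _)
    intro k
    rw [norm_mul, norm_pow, Real.norm_eq_abs, Real.norm_eq_abs, abs_of_nonneg hr0]
    exact mul_le_mul_of_nonneg_left (hδabs k) (by positivity)
  set ε : ℝ := ∑' k : ℕ, (1/(d:ℝ))^(k+1) * δ k with hεdef
  have htend : Tendsto (fun n => ∑ k ∈ Finset.range n, (1/(d:ℝ))^(k+1) * δ k)
      atTop (nhds ε) := hfsum.hasSum.tendsto_sum_nat
  -- sum of the geometric majorant
  have hSnn : 0 ≤ ∑' k : ℕ, (1/(d:ℝ))^(k+1) := tsum_nonneg (fun k => by positivity)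
  have hSval : ∑' k : ℕ, (1/(d:ℝ))^(k+1) ≤ 1 := by
    have h1 : (fun k : ℕ => (1/(d:ℝ))^(k+1)) = fun k : ℕ => (1/(d:ℝ)) * (1/(d:ℝ))^k := by
      funext k; rw [pow_succ]; ring
    rw [h1, tsum_mul_left, tsum_geometric_of_lt_one hr0 hr1]
    have h2 : 1/(d:ℝ) ≤ 1/2 := by
      rw [div_le_div_iff₀ (by linarith) (by norm_num)]; linarith
    have h3 : (0:ℝ) < 1 - 1/(d:ℝ) := by linarith
    calc (1/(d:ℝ)) * (1 - 1/(d:ℝ))⁻¹ ≤ (1 - 1/(d:ℝ)) * (1 - 1/(d:ℝ))⁻¹ :=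
          mul_le_mul_of_nonneg_right (by linarith) (by positivity)
      _ = 1 := mul_inv_cancel₀ h3.ne'
  have hlog2nn : 0 ≤ Real.log 2 := Real.log_nonneg (by norm_num)
  have hlog32nn : 0 ≤ Real.log (3/2) := Real.log_nonneg (by norm_num)
  have hlo : -Real.log 2 ≤ ε := by
    have h1 : ∀ k : ℕ, (-Real.log 2) * (1/(d:ℝ))^(k+1) ≤ (1/(d:ℝ))^(k+1) * δ k := by
      intro k
      calc (-Real.log 2) * (1/(d:ℝ))^(k+1) = (1/(d:ℝ))^(k+1) * (-Real.log 2) := by ring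
        _ ≤ (1/(d:ℝ))^(k+1) * δ k :=
            mul_le_mul_of_nonneg_left (hδbound k).1 (by positivity)
    have h2 := Summable.tsum_le_tsum h1 (hg.mul_left _) hfsum
    rw [tsum_mul_left] at h2
    nlinarith [mul_nonneg hlog2nn (sub_nonneg.mpr hSval)]
  have hhi : ε ≤ Real.log (3/2) := by
    have h1 : ∀ k : ℕ, (1/(d:ℝ))^(k+1) * δ k ≤ Real.log (3/2) * (1/(d:ℝ))^(k+1) := by
      intro k
      calc (1/(d:ℝ))^(k+1) * δ k ≤ (1/(d:ℝ))^(k+1) * Real.log (3/2) :=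
            mul_le_mul_of_nonneg_left (hδbound k).2 (by positivity)
        _ = Real.log (3/2) * (1/(d:ℝ))^(k+1) := by ring
    have h2 := Summable.tsum_le_tsum h1 hfsum (hg.mul_left _)
    rw [tsum_mul_left] at h2
    nlinarith [mul_nonneg hlog32nn (sub_nonneg.mpr hSval)]
  refine ⟨ε, hlo, hhi, ?_⟩
  -- identify the target function
  have heq : ∀ n : ℕ, ((d:ℝ)^n)⁻¹ * Real.log (max 1 ‖(fun x => φ.eval x)^[n] z‖)
      = s n - c * (1/(d:ℝ))^n := by
    intro n
    have hmax : max 1 ‖(fun x => φ.eval x)^[n] z‖ = ‖w n‖ := by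
      rw [hwdef]; exact max_eq_right (le_of_lt (hwp n))
    rw [hmax, hsdef, hudef]
    simp only []
    rw [one_div, inv_pow]
    ring
  have hlim1 : Tendsto s atTop (nhds (s 0 + ε)) := by
    have h1 : Tendsto (fun n => s 0 + ∑ k ∈ Finset.range n, (1/(d:ℝ))^(k+1) * δ k)
        atTop (nhds (s 0 + ε)) := tendsto_const_nhds.add htend
    exact h1.congr (fun n => (hsum n).symm)
  have hlim2 : Tendsto (fun n : ℕ => c * (1/(d:ℝ))^n) atTop (nhds 0) := by
    have h1 := tendsto_pow_atTop_nhds_zero_of_lt_one hr0 hr1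
    simpa using h1.const_mul c
  have hfin := hlim1.sub hlim2
  rw [sub_zero] at hfin
  have hs0 : s 0 = Real.log ‖z‖ + c := by
    rw [hsdef, hudef]; simp [hw0]
  have hfin2 : Tendsto
      (fun n : ℕ => ((d:ℝ)^n)⁻¹ * Real.log (max 1 ‖(fun x => φ.eval x)^[n] z‖))
      atTop (nhds (s 0 + ε)) := hfin.congr (fun n => (heq n).symm)
  rw [hs0] at hfin2
  exact hfin2
end

section
/- If φ is a polynomial of degree d ≥ 2 defined over a number field K, then there exists an affine map μ(z) = az + b with a, b algebraic such that μ^{-1} ∘ φ ∘ μ has the normal form f_c (fixed point at 0 and monic derivative), and the field of definition L of μ^{-1} ∘ φ ∘ μ satisfies [L : K] ≤ d(d−1). -/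
open Polynomial
open scoped IntermediateField

/-- a degree d ≥ 2 polynomial φ over a number field K is affine conjugate
(over the algebraic closure) to a polynomial g in the normal form f_c (g(0) = 0 and g'
monic), where the affine map μ(z) = az + b and the coefficients of g all lie in a number
field L ⊇ K with [L : K] ≤ d(d-1). -/
theorem stmt4 (K : Type*) [Field K] [NumberField K]
    (φ : Polynomial K) (d : ℕ) (hd : 2 ≤ d) (hdeg : φ.natDegree = d) :
    ∃ (L : IntermediateField K (AlgebraicClosure K)) (a b : AlgebraicClosure K)
      (g : Polynomial (AlgebraicClosure K)),
      FiniteDimensional K L ∧ Module.finrank K L ≤ d * (d - 1) ∧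
      a ≠ 0 ∧ a ∈ L ∧ b ∈ L ∧ (∀ n : ℕ, g.coeff n ∈ L) ∧
      g.natDegree = d ∧ g.eval 0 = 0 ∧ (Polynomial.derivative g).Monic ∧
      ∀ z : AlgebraicClosure K,
        a * g.eval z + b = (φ.map (algebraMap K (AlgebraicClosure K))).eval (a * z + b) := by
  classical
  set A := AlgebraicClosure K
  have hφ0 : φ ≠ 0 := by
    intro h; rw [h] at hdeg; simp at hdeg; omega
  set ψ : Polynomial A := φ.map (algebraMap K A) with hψ
  have hinj : Function.Injective (algebraMap K A) := (algebraMap K A).injective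
  have hψdeg : ψ.natDegree = d := by
    rw [hψ, natDegree_map_eq_of_injective hinj, hdeg]
  have hψ0 : ψ ≠ 0 := by
    intro h
    rw [h] at hψdeg; simp at hψdeg; omega
  -- leading coefficient
  set c : A := ψ.leadingCoeff with hc
  have hc0 : c ≠ 0 := leadingCoeff_ne_zero.mpr hψ0
  have hdA : (d : A) ≠ 0 := Nat.cast_ne_zero.mpr (by omega)
  -- choose a with a^(d-1) = (d*c)⁻¹
  obtain ⟨a, ha⟩ := IsAlgClosed.exists_pow_nat_eq ((d : A) * c)⁻¹ (n := d - 1) (by omega)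
  have ha0 : a ≠ 0 := by
    intro h
    rw [h, zero_pow (by omega : d - 1 ≠ 0)] at ha
    exact (inv_ne_zero (mul_ne_zero hdA hc0)) ha.symm
  -- choose a fixed point γ
  have hfixdeg : (ψ - X).natDegree = d := by
    rw [natDegree_sub_eq_left_of_natDegree_lt]
    · exact hψdeg
    · simpa [hψdeg] using (by omega : 1 < d)
  have hfix0 : ψ - X ≠ 0 := by
    intro h; rw [h] at hfixdeg; simp at hfixdeg; omega
  obtain ⟨γ, hγ⟩ := IsAlgClosed.exists_root (ψ - X)
    (by rw [degree_eq_natDegree hfix0, hfixdeg]; exact_mod_cast (by omega : d ≠ 0))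
  have hγfix : ψ.eval γ = γ := by
    have := hγ; rw [IsRoot, eval_sub, eval_X, sub_eq_zero] at this; exact this
  -- the field L
  set L : IntermediateField K A := IntermediateField.adjoin K {γ, a} with hL
  have hγL : γ ∈ L := IntermediateField.subset_adjoin K _ (by simp)
  have haL : a ∈ L := IntermediateField.subset_adjoin K _ (by simp)
  -- algebraicity
  have hγint : IsIntegral K γ := Algebra.IsIntegral.isIntegral γ
  have haint : IsIntegral K a := Algebra.IsIntegral.isIntegral a
  -- finite dimensionality and rank bound
  have hres : (K⟮γ⟯⟮a⟯).restrictScalars K = L := by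
    rw [hL]
    exact IntermediateField.adjoin_simple_adjoin_simple K γ a
  have hfd1 : FiniteDimensional K K⟮γ⟯ := IntermediateField.adjoin.finiteDimensional hγint
  have haint2 : IsIntegral K⟮γ⟯ a := Algebra.IsIntegral.isIntegral a
  have hfd2 : FiniteDimensional K⟮γ⟯ K⟮γ⟯⟮a⟯ :=
    IntermediateField.adjoin.finiteDimensional haint2
  have hfdL : FiniteDimensional K L := by
    rw [← hres]
    exact FiniteDimensional.trans K K⟮γ⟯ K⟮γ⟯⟮a⟯
  have hsubdeg : (φ - X).natDegree = d := by
    rw [natDegree_sub_eq_left_of_natDegree_lt, hdeg]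
    simpa [hdeg] using (by omega : 1 < d)
  have hsub0 : φ - X ≠ 0 := by
    intro h; rw [h] at hsubdeg; simp at hsubdeg; omega
  have hrk1 : Module.finrank K K⟮γ⟯ ≤ d := by
    rw [IntermediateField.adjoin.finrank hγint]
    have hroot : (Polynomial.aeval γ) (φ - X) = 0 := by
      rw [map_sub, aeval_X, sub_eq_zero, aeval_def, ← eval_map, ← hψ]
      exact hγfix
    have h1 := minpoly.degree_le_of_ne_zero K γ hsub0 hroot
    have h2 : (minpoly K γ).natDegree ≤ (φ - X).natDegree :=
      natDegree_le_natDegree h1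
    omega
  -- value in K whose inverse pow a satisfies
  set t : K := ((d : K) * φ.leadingCoeff)⁻¹ with ht
  have hct : algebraMap K A t = ((d : A) * c)⁻¹ := by
    rw [ht, map_inv₀, map_mul, map_natCast, hc, hψ, leadingCoeff_map_of_injective hinj]
  have hrk2 : Module.finrank K⟮γ⟯ K⟮γ⟯⟮a⟯ ≤ d - 1 := by
    rw [IntermediateField.adjoin.finrank haint2]
    set p : Polynomial K⟮γ⟯ := X ^ (d - 1) - C (algebraMap K K⟮γ⟯ t) with hp
    have hpdeg : p.natDegree = d - 1 := by
      rw [hp, natDegree_X_pow_sub_C]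
    have hp0 : p ≠ 0 := by
      intro h; rw [h] at hpdeg; simp at hpdeg; omega
    have hroot : (Polynomial.aeval a) p = 0 := by
      rw [hp, map_sub, aeval_X_pow, aeval_C, ha,
        ← IsScalarTower.algebraMap_apply K K⟮γ⟯ A, hct, sub_self]
    have h1 := minpoly.degree_le_of_ne_zero K⟮γ⟯ a hp0 hroot
    have h2 : (minpoly K⟮γ⟯ a).natDegree ≤ p.natDegree :=
      natDegree_le_natDegree h1
    omega
  have hrkL : Module.finrank K L ≤ d * (d - 1) := by
    have htower : Module.finrank K K⟮γ⟯ * Module.finrank K⟮γ⟯ K⟮γ⟯⟮a⟯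
        = Module.finrank K K⟮γ⟯⟮a⟯ := Module.finrank_mul_finrank _ _ _
    have hre : Module.finrank K (K⟮γ⟯⟮a⟯.restrictScalars K) = Module.finrank K K⟮γ⟯⟮a⟯ := rfl
    rw [← hres, hre, ← htower]
    exact Nat.mul_le_mul hrk1 hrk2
  -- define g over L then map to A
  have htL : algebraMap K A t = algebraMap L A (algebraMap K L t) :=
    IsScalarTower.algebraMap_apply K L A t
  set aL : L := ⟨a, haL⟩ with haLdef
  set bL : L := ⟨γ, hγL⟩ with hbLdef
  set φL : Polynomial L := φ.map (algebraMap K L) with hφL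
  set gL : Polynomial L := C aL⁻¹ * (φL.comp (C aL * X + C bL) - C bL) with hgL
  set g : Polynomial A := gL.map (algebraMap L A) with hg
  have halg : algebraMap L A aL = a := rfl
  have hbalg : algebraMap L A bL = γ := rfl
  have hψL : φL.map (algebraMap L A) = ψ := by
    rw [hφL, hψ, Polynomial.map_map, ← IsScalarTower.algebraMap_eq]
  have hgform : g = C a⁻¹ * (ψ.comp (C a * X + C γ) - C γ) := by
    rw [hg, hgL]
    simp only [Polynomial.map_mul, Polynomial.map_sub, Polynomial.map_comp,
      Polynomial.map_add, Polynomial.map_C, Polynomial.map_X, map_inv₀, halg, hbalg, hψL]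
  have haA0 : (a : A) ≠ 0 := ha0
  -- evaluation identity
  have heval : ∀ z : A, g.eval z = a⁻¹ * (ψ.eval (a * z + γ) - γ) := by
    intro z
    rw [hgform]
    simp [eval_comp]
  have hevid : ∀ z : A, a * g.eval z + γ = ψ.eval (a * z + γ) := by
    intro z
    rw [heval z]
    rw [← mul_assoc, mul_inv_cancel₀ ha0, one_mul, sub_add_cancel]
  -- natDegree
  have hlin : (C a * X + C γ : Polynomial A).natDegree = 1 := by
    rw [natDegree_add_C, natDegree_C_mul ha0, natDegree_X]
  have hcompdeg : (ψ.comp (C a * X + C γ)).natDegree = d := by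
    rw [natDegree_comp, hlin, hψdeg, mul_one]
  have hgdeg : g.natDegree = d := by
    rw [hgform, natDegree_C_mul (inv_ne_zero ha0), natDegree_sub_C, hcompdeg]
  -- eval 0
  have hg0 : g.eval 0 = 0 := by
    rw [heval 0]
    simp [hγfix]
  -- derivative monic
  have hcast : ((d - 1 : ℕ) : A) + 1 = (d : A) := by
    rw [Nat.cast_sub (by omega : 1 ≤ d)]
    ring
  have hψ'deg : (derivative ψ).natDegree = d - 1 := by
    refine le_antisymm (by simpa [hψdeg] using natDegree_derivative_le ψ) ?_
    apply le_natDegree_of_ne_zero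
    rw [coeff_derivative]
    have : ψ.coeff (d - 1 + 1) = c := by
      rw [hc, leadingCoeff, hψdeg]
      congr 1
      omega
    rw [this, hcast]
    exact mul_ne_zero hc0 hdA
  have hψ'lc : (derivative ψ).leadingCoeff = (d : A) * c := by
    rw [leadingCoeff, hψ'deg, coeff_derivative]
    have h1 : ψ.coeff (d - 1 + 1) = c := by
      rw [hc, leadingCoeff, hψdeg]
      congr 1
      omega
    rw [h1, hcast]
    ring
  have hgder : derivative g = C a⁻¹ * (C a * (derivative ψ).comp (C a * X + C γ)) := by
    rw [hgform, derivative_C_mul, derivative_sub, derivative_C, sub_zero, derivative_comp]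
    congr 1
    rw [derivative_add, derivative_C_mul, derivative_C, derivative_X, mul_one, add_zero]
  have hmonic : (derivative g).Monic := by
    unfold Monic
    rw [hgder, ← mul_assoc, ← C_mul, inv_mul_cancel₀ ha0, C_1, one_mul,
      leadingCoeff_comp (by rw [hlin]; omega)]
    have hlclin : (C a * X + C γ : Polynomial A).leadingCoeff = a := by
      rw [leadingCoeff, hlin, coeff_add, coeff_C_mul, coeff_X_one, mul_one,
        coeff_C, if_neg one_ne_zero, add_zero]
    rw [hlclin, hψ'lc, hψ'deg, ha]
    exact mul_inv_cancel₀ (mul_ne_zero hdA hc0)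
  -- coefficients in L
  have hcoeff : ∀ n : ℕ, g.coeff n ∈ L := by
    intro n
    rw [hg, coeff_map]
    exact (gL.coeff n).2
  exact ⟨L, a, γ, g, hfdL, hrkL, ha0, haL, hγL, hcoeff, hgdeg, hg0, hmonic, hevid⟩
end
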